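/- Let V and W be finite-dimensional real vector spaces, let P ⊆ V be a nonempty polytope with affineSpan ℝ P = ⊤, and let Q ⊆ W be a nonempty polytope with affineSpan ℝ Q = ⊤. Then the affine span of the tensor product polytope P ⊗ Q ⊆ (V ⊗[ℝ] W) × V × W is the whole ambient space; in particular, dim (P ⊗ Q) = dim P · dim Q + dim P + dim Q. -/

import Mathlib

open scoped TensorProduct

/-- A polytope: the convex hull of a finite set of points. -/
def IsPolytope {V : Type*} [AddCommGroup V] [Module ℝ V] (P : Set V) : Prop :=
  ∃ F : Finset V, P = convexHull ℝ (F : Set V)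

/-- The tensor product of two polytopes `P ⊆ V` and `Q ⊆ W`:
the convex hull of `{(x ⊗ y, x, y) : x a vertex of P, y a vertex of Q}`
in `(V ⊗[ℝ] W) × V × W`. -/
def tensorPolytope {V W : Type*} [AddCommGroup V] [Module ℝ V] [AddCommGroup W] [Module ℝ W]
    (P : Set V) (Q : Set W) : Set ((V ⊗[ℝ] W) × V × W) :=
  convexHull ℝ
    {p | ∃ x ∈ Set.extremePoints ℝ P, ∃ y ∈ Set.extremePoints ℝ Q,
      p = (x ⊗ₜ[ℝ] y, x, y)}

lemma convexHull_extremePoints_polytope {V : Type*} [AddCommGroup V] [Module ℝ V]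
    [FiniteDimensional ℝ V] (F : Finset V) :
    convexHull ℝ ((convexHull ℝ (F : Set V)).extremePoints ℝ) = convexHull ℝ (F : Set V) := by
  classical
  let n := Module.finrank ℝ V
  let e : V ≃ₗ[ℝ] (Fin n → ℝ) := (Module.finBasis ℝ V).equivFun
  set s : Set V := convexHull ℝ (F : Set V)
  have himg : (e : V →ₗ[ℝ] (Fin n → ℝ)) '' s = convexHull ℝ (e '' (F : Set V)) := by
    simpa [s] using (e : V →ₗ[ℝ] (Fin n → ℝ)).image_convexHull (F : Set V)
  have hfin : (e '' (F : Set V)).Finite := F.finite_toSet.image e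
  have hcomp : IsCompact (convexHull ℝ (e '' (F : Set V))) := hfin.isCompact_convexHull (𝕜 := ℝ)
  have hext : ((convexHull ℝ (e '' (F : Set V))).extremePoints ℝ).Finite :=
    hfin.subset extremePoints_convexHull_subset
  have hKM : closure (convexHull ℝ ((convexHull ℝ (e '' (F : Set V))).extremePoints ℝ))
      = convexHull ℝ (e '' (F : Set V)) :=
    closure_convexHull_extremePoints hcomp (convex_convexHull ℝ _)
  have hclosed : closure (convexHull ℝ ((convexHull ℝ (e '' (F : Set V))).extremePoints ℝ))
      = convexHull ℝ ((convexHull ℝ (e '' (F : Set V))).extremePoints ℝ) :=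
    ((hext.isCompact_convexHull (𝕜 := ℝ)).isClosed).closure_eq
  have key : convexHull ℝ ((convexHull ℝ (e '' (F : Set V))).extremePoints ℝ)
      = convexHull ℝ (e '' (F : Set V)) := by rw [← hclosed, hKM]
  have h1 : e '' convexHull ℝ (s.extremePoints ℝ) = e '' s := by
    calc e '' convexHull ℝ (s.extremePoints ℝ)
        = convexHull ℝ (e '' (s.extremePoints ℝ)) := by
          simpa using (e : V →ₗ[ℝ] (Fin n → ℝ)).image_convexHull (s.extremePoints ℝ)
      _ = convexHull ℝ ((e '' s).extremePoints ℝ) := by rw [image_extremePoints]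
      _ = e '' s := by
          rw [show e '' s = convexHull ℝ (e '' (F : Set V)) from by simpa using himg, key]
  exact e.injective.image_injective h1

theorem stmt_14 {V W : Type*}
    [AddCommGroup V] [Module ℝ V] [FiniteDimensional ℝ V]
    [AddCommGroup W] [Module ℝ W] [FiniteDimensional ℝ W]
    (P : Set V) (Q : Set W)
    (hP : IsPolytope P) (hPne : P.Nonempty) (hPspan : affineSpan ℝ P = ⊤)
    (hQ : IsPolytope Q) (hQne : Q.Nonempty) (hQspan : affineSpan ℝ Q = ⊤) :
    affineSpan ℝ (tensorPolytope P Q) = ⊤ ∧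
    Module.finrank ℝ ((V ⊗[ℝ] W) × V × W) =
      Module.finrank ℝ V * Module.finrank ℝ W
        + Module.finrank ℝ V + Module.finrank ℝ W := by
  constructor
  · -- the span part
    set EP := P.extremePoints ℝ with hEPdef
    set EQ := Q.extremePoints ℝ with hEQdef
    have hPhull : convexHull ℝ EP = P := by
      obtain ⟨F, rfl⟩ := hP; exact convexHull_extremePoints_polytope F
    have hQhull : convexHull ℝ EQ = Q := by
      obtain ⟨G, rfl⟩ := hQ; exact convexHull_extremePoints_polytope G
    have hEPne : EP.Nonempty := by
      have h := hPne; rw [← hPhull] at h; exact convexHull_nonempty_iff.mp h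
    have hEQne : EQ.Nonempty := by
      have h := hQne; rw [← hQhull] at h; exact convexHull_nonempty_iff.mp h
    obtain ⟨x0, hx0⟩ := hEPne
    obtain ⟨y0, hy0⟩ := hEQne
    -- vector spans
    have hVspan : Submodule.span ℝ ((· -ᵥ x0) '' EP) = ⊤ := by
      rw [← vectorSpan_eq_span_vsub_set_right ℝ hx0, ← direction_affineSpan,
        ← affineSpan_convexHull, hPhull, hPspan, AffineSubspace.direction_top]
    have hWspan : Submodule.span ℝ ((· -ᵥ y0) '' EQ) = ⊤ := by
      rw [← vectorSpan_eq_span_vsub_set_right ℝ hy0, ← direction_affineSpan,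
        ← affineSpan_convexHull, hQhull, hQspan, AffineSubspace.direction_top]
    set S : Set ((V ⊗[ℝ] W) × V × W) :=
      {p | ∃ x ∈ EP, ∃ y ∈ EQ, p = (x ⊗ₜ[ℝ] y, x, y)}
    have hSne : S.Nonempty := ⟨(x0 ⊗ₜ[ℝ] y0, x0, y0), x0, hx0, y0, hy0, rfl⟩
    rw [tensorPolytope, affineSpan_convexHull]
    rw [AffineSubspace.affineSpan_eq_top_iff_vectorSpan_eq_top_of_nonempty ℝ _ _ hSne]
    set M := vectorSpan ℝ S with hM
    have hmemS : ∀ x ∈ EP, ∀ y ∈ EQ, (x ⊗ₜ[ℝ] y, x, y) ∈ S :=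
      fun x hx y hy => ⟨x, hx, y, hy, rfl⟩
    have hdiff : ∀ x ∈ EP, ∀ x' ∈ EP, ∀ y ∈ EQ,
        ((x - x') ⊗ₜ[ℝ] y, x - x', (0 : W)) ∈ M := by
      intro x hx x' hx' y hy
      have := vsub_mem_vectorSpan ℝ (hmemS x hx y hy) (hmemS x' hx' y hy)
      simpa [vsub_eq_sub, Prod.ext_iff, TensorProduct.sub_tmul] using this
    -- f v = (v ⊗ y0, v, 0) lands in M
    have hf : ∀ v : V, ((v ⊗ₜ[ℝ] y0, v, (0 : W)) : (V ⊗[ℝ] W) × V × W) ∈ M := by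
      let f : V →ₗ[ℝ] (V ⊗[ℝ] W) × V × W :=
        LinearMap.prod ((TensorProduct.mk ℝ V W).flip y0) (LinearMap.prod LinearMap.id 0)
      have hle : Submodule.span ℝ ((· -ᵥ x0) '' EP) ≤ M.comap f := by
        rw [Submodule.span_le]
        rintro _ ⟨x, hx, rfl⟩
        exact hdiff x hx x0 hx0 y0 hy0
      intro v
      have : v ∈ M.comap f := by rw [hVspan] at hle; exact hle trivial
      simpa [f] using this
    -- g w = (x0 ⊗ w, 0, w) lands in M
    have hdiff' : ∀ x ∈ EP, ∀ y ∈ EQ, ∀ y' ∈ EQ,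
        (x ⊗ₜ[ℝ] (y - y'), (0 : V), y - y') ∈ M := by
      intro x hx y hy y' hy'
      have := vsub_mem_vectorSpan ℝ (hmemS x hx y hy) (hmemS x hx y' hy')
      simpa [vsub_eq_sub, Prod.ext_iff, TensorProduct.tmul_sub] using this
    have hg : ∀ w : W, ((x0 ⊗ₜ[ℝ] w, (0 : V), w) : (V ⊗[ℝ] W) × V × W) ∈ M := by
      let g : W →ₗ[ℝ] (V ⊗[ℝ] W) × V × W :=
        LinearMap.prod (TensorProduct.mk ℝ V W x0) (LinearMap.prod 0 LinearMap.id)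
      have hle : Submodule.span ℝ ((· -ᵥ y0) '' EQ) ≤ M.comap g := by
        rw [Submodule.span_le]
        rintro _ ⟨y, hy, rfl⟩
        exact hdiff' x0 hx0 y hy y0 hy0
      intro w
      have : w ∈ M.comap g := by rw [hWspan] at hle; exact hle trivial
      simpa [g] using this
    -- ((x - x0) ⊗ (y - y0), 0, 0) ∈ M
    have hcorner : ∀ x ∈ EP, ∀ y ∈ EQ,
        (((x - x0) ⊗ₜ[ℝ] (y - y0), (0 : V), (0 : W)) : (V ⊗[ℝ] W) × V × W) ∈ M := by
      intro x hx y hy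
      have h1 := hdiff x hx x0 hx0 y hy
      have h2 := hdiff x hx x0 hx0 y0 hy0
      have := M.sub_mem h1 h2
      have heq : (((x - x0) ⊗ₜ[ℝ] y, x - x0, (0:W)) : (V ⊗[ℝ] W) × V × W)
          - ((x - x0) ⊗ₜ[ℝ] y0, x - x0, (0:W))
          = ((x - x0) ⊗ₜ[ℝ] (y - y0), (0:V), (0:W)) := by
        simp [Prod.ext_iff, TensorProduct.tmul_sub]
      rwa [heq] at this
    -- for x ∈ EP : ((x - x0) ⊗ w, 0, 0) ∈ M for all w
    have hcorner2 : ∀ x ∈ EP, ∀ w : W,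
        (((x - x0) ⊗ₜ[ℝ] w, (0 : V), (0 : W)) : (V ⊗[ℝ] W) × V × W) ∈ M := by
      intro x hx
      let g : W →ₗ[ℝ] (V ⊗[ℝ] W) × V × W :=
        LinearMap.prod (TensorProduct.mk ℝ V W (x - x0)) 0
      have hle : Submodule.span ℝ ((· -ᵥ y0) '' EQ) ≤ M.comap g := by
        rw [Submodule.span_le]
        rintro _ ⟨y, hy, rfl⟩
        exact hcorner x hx y hy
      intro w
      have hmem : w ∈ M.comap g := by rw [hWspan] at hle; exact hle trivial
      exact hmem
    have hcorner3 : ∀ (v : V) (w : W),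
        ((v ⊗ₜ[ℝ] w, (0 : V), (0 : W)) : (V ⊗[ℝ] W) × V × W) ∈ M := by
      intro v w
      let f : V →ₗ[ℝ] (V ⊗[ℝ] W) × V × W :=
        LinearMap.prod ((TensorProduct.mk ℝ V W).flip w) 0
      have hle : Submodule.span ℝ ((· -ᵥ x0) '' EP) ≤ M.comap f := by
        rw [Submodule.span_le]
        rintro _ ⟨x, hx, rfl⟩
        exact hcorner2 x hx w
      have hmem : v ∈ M.comap f := by rw [hVspan] at hle; exact hle trivial
      exact hmem
    have htens : ∀ t : V ⊗[ℝ] W,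
        ((t, (0 : V), (0 : W)) : (V ⊗[ℝ] W) × V × W) ∈ M := by
      let i : (V ⊗[ℝ] W) →ₗ[ℝ] (V ⊗[ℝ] W) × V × W := LinearMap.prod LinearMap.id 0
      have hle : Submodule.span ℝ { t : V ⊗[ℝ] W | ∃ m n, m ⊗ₜ n = t } ≤ M.comap i := by
        rw [Submodule.span_le]
        rintro _ ⟨v, w, rfl⟩
        exact hcorner3 v w
      intro t
      have hmem : t ∈ M.comap i := by rw [TensorProduct.span_tmul_eq_top] at hle; exact hle trivial
      exact hmem
    rw [eq_top_iff]
    rintro ⟨t, v, w⟩ -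
    have h1 := hf v
    have h2 := hg w
    have h3 := htens (t - v ⊗ₜ[ℝ] y0 - x0 ⊗ₜ[ℝ] w)
    have := M.add_mem (M.add_mem h1 h2) h3
    have heq : ((v ⊗ₜ[ℝ] y0, v, (0:W)) : (V ⊗[ℝ] W) × V × W) + (x0 ⊗ₜ[ℝ] w, (0:V), w)
        + (t - v ⊗ₜ[ℝ] y0 - x0 ⊗ₜ[ℝ] w, (0:V), (0:W)) = (t, v, w) := by
      simp [Prod.ext_iff]
    rwa [heq] at this
  · rw [Module.finrank_prod, Module.finrank_prod, Module.finrank_tensorProduct]; ring
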